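/- arXiv:2206.04755 — 2 statements merged into one kernel-verified Lean document; each statement's English description precedes it below -/
import Mathlib

section
/- Let (X,φ) be an expansive dynamical system equipped with an adapted metric (with contraction constant 0 < λ < 1 and constant η > 0). Fix 0 < ε₀ ≤ η and suppose (x,x) lies in the interior of D_{ε₀}. Then for every ε > 0 there exists δ > 0 such that whenever d(x,y) < δ and d(x,z) < δ, the bracket [y,z] is defined and satisfies [y,z] ∈ Xˢ(y,ε) ∩ Xᵘ(z,ε). -/
open Filter Topology Set

namespace Paper

variable {X : Type*} [MetricSpace X] [CompactSpace X]

/-- The `n`-th iterate (for `n : ℤ`) of the homeomorphism `φ`. -/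
def It (φ : X ≃ₜ X) (n : ℤ) : X → X := fun x => (φ.toEquiv ^ n) x

/-- The local stable set `Xˢ(x, ε)`. -/
def locS (φ : X ≃ₜ X) (x : X) (ε : ℝ) : Set X :=
  {y | ∀ n : ℕ, dist (It φ n x) (It φ n y) ≤ ε}

/-- The local unstable set `Xᵘ(x, ε)`. -/
def locU (φ : X ≃ₜ X) (x : X) (ε : ℝ) : Set X :=
  {y | ∀ n : ℕ, dist (It φ (-(n : ℤ)) x) (It φ (-(n : ℤ)) y) ≤ ε}

/-- The set `D_ε` on which the bracket is defined. -/
def Dset (φ : X ≃ₜ X) (ε : ℝ) : Set (X × X) :=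
  {p | (locS φ p.1 ε ∩ locU φ p.2 ε).Nonempty}

/-- `(X, φ)` is expansive with expansiveness constant `εX`. -/
def IsExpansive (φ : X ≃ₜ X) (εX : ℝ) : Prop :=
  0 < εX ∧ ∀ x y : X, (∀ n : ℤ, dist (It φ n x) (It φ n y) ≤ εX) → x = y

/-- The metric is adapted (Fried), with constants `η` and `lam`. -/
def IsAdapted (φ : X ≃ₜ X) (η lam : ℝ) : Prop :=
  0 < η ∧ 0 < lam ∧ lam < 1 ∧
    (∀ x y : X, y ∈ locS φ x η → dist (φ x) (φ y) ≤ lam * dist x y) ∧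
    (∀ x y : X, y ∈ locU φ x η → dist (φ.symm x) (φ.symm y) ≤ lam * dist x y)

/-- `p` is a periodic point of `φ`. -/
def IsPeriodic (φ : X ≃ₜ X) (p : X) : Prop :=
  ∃ n : ℕ, 1 ≤ n ∧ It φ n p = p

/-- `x` is a synchronizing point: `(x, x)` is in the interior of `D_ε` for
some `0 < ε ≤ ε₀`. -/
def IsSyncPt (φ : X ≃ₜ X) (ε₀ : ℝ) (x : X) : Prop :=
  ∃ ε : ℝ, 0 < ε ∧ ε ≤ ε₀ ∧ (x, x) ∈ interior (Dset φ ε)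

/-- `(X, φ)` is irreducible. -/
def Irred (φ : X ≃ₜ X) : Prop :=
  ∀ U V : Set X, IsOpen U → IsOpen V → U.Nonempty → V.Nonempty →
    ∃ n : ℕ, 0 < n ∧ (It φ n '' U ∩ V).Nonempty

/-- `(X, φ)` is mixing. -/
def Mixing (φ : X ≃ₜ X) : Prop :=
  ∀ U V : Set X, IsOpen U → IsOpen V → U.Nonempty → V.Nonempty →
    ∃ N : ℕ, ∀ n : ℕ, N ≤ n → (It φ n '' U ∩ V).Nonempty

/-- Every point of `(X, φ)` is non-wandering. -/
def NonWandering (φ : X ≃ₜ X) : Prop :=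
  ∀ x : X, ∀ U ∈ 𝓝 x, ∃ n : ℕ, 0 < n ∧ (It φ n '' U ∩ U).Nonempty

/-- Stable equivalence `x ∼ₛ y`. -/
def StableEq (φ : X ≃ₜ X) (x y : X) : Prop :=
  Tendsto (fun n : ℕ => dist (It φ n x) (It φ n y)) atTop (𝓝 0)

/-- Unstable equivalence `x ∼ᵤ y`. -/
def UnstableEq (φ : X ≃ₜ X) (x y : X) : Prop :=
  Tendsto (fun n : ℕ => dist (It φ (-(n : ℤ)) x) (It φ (-(n : ℤ)) y)) atTop (𝓝 0)

/-- Local conjugacy `x ∼_lc y`: a homeomorphism `γ : U → V` of open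
neighborhoods with `γ x = y` and `sup_{z ∈ U} d(φⁿ z, φⁿ (γ z)) → 0` as
`n → ±∞`. -/
def LocConj (φ : X ≃ₜ X) (x y : X) : Prop :=
  ∃ (U V : Set X) (γ γinv : X → X),
    IsOpen U ∧ IsOpen V ∧ x ∈ U ∧ y ∈ V ∧ γ x = y ∧
    Set.MapsTo γ U V ∧ Set.MapsTo γinv V U ∧
    (∀ z ∈ U, γinv (γ z) = z) ∧ (∀ w ∈ V, γ (γinv w) = w) ∧
    ContinuousOn γ U ∧ ContinuousOn γinv V ∧
    (∀ ε : ℝ, 0 < ε → ∃ N : ℕ, ∀ n : ℤ, (N : ℤ) ≤ |n| → ∀ z ∈ U,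
      dist (It φ n z) (It φ n (γ z)) ≤ ε)

/-- Stable local conjugacy `x ∼_lcs y`: a homeomorphism of `Xᵘ(x, δ)` onto
its image in `Xᵘ(y, δ')` sending `x` to `y`, uniformly asymptotic in forward
time. -/
def StableLC (φ : X ≃ₜ X) (x y : X) : Prop :=
  ∃ (δ δ' : ℝ) (γ : X → X), 0 < δ ∧ 0 < δ' ∧
    Set.MapsTo γ (locU φ x δ) (locU φ y δ') ∧
    Set.InjOn γ (locU φ x δ) ∧ ContinuousOn γ (locU φ x δ) ∧ γ x = y ∧
    (∀ ε : ℝ, 0 < ε → ∃ N : ℕ, ∀ n : ℕ, N ≤ n → ∀ z ∈ locU φ x δ,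
      dist (It φ n z) (It φ n (γ z)) ≤ ε)

/-- Unstable local conjugacy `x ∼_lcu y`: a homeomorphism of `Xˢ(x, δ)` onto
its image in `Xˢ(y, δ')` sending `x` to `y`, uniformly asymptotic in backward
time. -/
def UnstableLC (φ : X ≃ₜ X) (x y : X) : Prop :=
  ∃ (δ δ' : ℝ) (γ : X → X), 0 < δ ∧ 0 < δ' ∧
    Set.MapsTo γ (locS φ x δ) (locS φ y δ') ∧
    Set.InjOn γ (locS φ x δ) ∧ ContinuousOn γ (locS φ x δ) ∧ γ x = y ∧
    (∀ ε : ℝ, 0 < ε → ∃ N : ℕ, ∀ n : ℕ, N ≤ n → ∀ z ∈ locS φ x δ,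
      dist (It φ (-(n : ℤ)) z) (It φ (-(n : ℤ)) (γ z)) ≤ ε)

lemma It_add (φ : X ≃ₜ X) (m k : ℤ) (x : X) :
    It φ m (It φ k x) = It φ (m + k) x := by
  simp only [It, ← Equiv.Perm.mul_apply, ← zpow_add]

lemma It_one_add (φ : X ≃ₜ X) (n : ℤ) (x : X) : It φ (1 + n) x = φ (It φ n x) := by
  simp only [It, zpow_add, zpow_one, Equiv.Perm.mul_apply]
  rfl

lemma It_neg_one_add (φ : X ≃ₜ X) (n : ℤ) (x : X) :
    It φ (-1 + n) x = φ.symm (It φ n x) := by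
  simp only [It, zpow_add, zpow_neg, zpow_one, Equiv.Perm.mul_apply]
  rfl

lemma It_continuous (φ : X ≃ₜ X) (n : ℤ) : Continuous (It φ n) := by
  induction n using Int.induction_on with
  | zero =>
      have h : It φ 0 = id := funext fun x => by simp [It]
      rw [h]; exact continuous_id
  | succ k ih =>
      have h : It φ ((k : ℤ) + 1) = fun x => φ (It φ (k : ℤ) x) := by
        funext x; rw [add_comm]; exact It_one_add φ k x
      rw [h]; exact φ.continuous.comp ih
  | pred k ih =>
      have h : It φ (-(k : ℤ) - 1) = fun x => φ.symm (It φ (-(k : ℤ)) x) := by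
        funext x
        rw [show -(k : ℤ) - 1 = -1 + -(k : ℤ) by ring]
        exact It_neg_one_add φ _ x
      rw [h]; exact φ.symm.continuous.comp ih

lemma locS_shift (φ : X ≃ₜ X) {y w : X} {ε : ℝ} (h : w ∈ locS φ y ε) (k : ℕ) :
    It φ k w ∈ locS φ (It φ k y) ε := by
  intro n
  rw [It_add, It_add]
  have := h (n + k)
  rwa [Nat.cast_add] at this

lemma locU_shift (φ : X ≃ₜ X) {y w : X} {ε : ℝ} (h : w ∈ locU φ y ε) (k : ℕ) :
    It φ (-(k : ℤ)) w ∈ locU φ (It φ (-(k : ℤ)) y) ε := by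
  intro n
  rw [It_add, It_add]
  have := h (n + k)
  rwa [Nat.cast_add, neg_add] at this

lemma stable_dist_le (φ : X ≃ₜ X) {η lam : ℝ} (had : IsAdapted φ η lam) {y w : X}
    (h : w ∈ locS φ y η) (n : ℕ) : dist (It φ n y) (It φ n w) ≤ dist y w := by
  induction n with
  | zero => simp [It]
  | succ k ih =>
      have hk := locS_shift φ h k
      have hstep := had.2.2.2.1 _ _ hk
      have h1 : ∀ a : X, It φ ((k + 1 : ℕ) : ℤ) a = φ (It φ (k : ℕ) a) := by
        intro a
        rw [show ((k + 1 : ℕ) : ℤ) = 1 + (k : ℕ) by push_cast; ring]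
        exact It_one_add φ _ a
      rw [h1, h1]
      calc dist (φ (It φ (k : ℕ) y)) (φ (It φ (k : ℕ) w))
          ≤ lam * dist (It φ (k : ℕ) y) (It φ (k : ℕ) w) := hstep
        _ ≤ lam * dist y w := mul_le_mul_of_nonneg_left ih (le_of_lt had.2.1)
        _ ≤ 1 * dist y w := mul_le_mul_of_nonneg_right (le_of_lt had.2.2.1) dist_nonneg
        _ = dist y w := one_mul _

lemma unstable_dist_le (φ : X ≃ₜ X) {η lam : ℝ} (had : IsAdapted φ η lam) {y w : X}
    (h : w ∈ locU φ y η) (n : ℕ) :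
    dist (It φ (-(n : ℤ)) y) (It φ (-(n : ℤ)) w) ≤ dist y w := by
  induction n with
  | zero => simp [It]
  | succ k ih =>
      have hk := locU_shift φ h k
      have hstep := had.2.2.2.2 _ _ hk
      have h1 : ∀ a : X, It φ (-((k + 1 : ℕ) : ℤ)) a = φ.symm (It φ (-(k : ℤ)) a) := by
        intro a
        rw [show -((k + 1 : ℕ) : ℤ) = -1 + -(k : ℕ) by push_cast; ring]
        exact It_neg_one_add φ _ a
      rw [h1, h1]
      calc dist (φ.symm (It φ (-(k : ℤ)) y)) (φ.symm (It φ (-(k : ℤ)) w))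
          ≤ lam * dist (It φ (-(k : ℤ)) y) (It φ (-(k : ℤ)) w) := hstep
        _ ≤ lam * dist y w := mul_le_mul_of_nonneg_left ih (le_of_lt had.2.1)
        _ ≤ 1 * dist y w := mul_le_mul_of_nonneg_right (le_of_lt had.2.2.1) dist_nonneg
        _ = dist y w := one_mul _

/-- continuity of the bracket near a point `x` with
`(x,x) ∈ int D_{ε₀}`. -/
theorem bracket_epsilon_continuity (φ : X ≃ₜ X) (εX η lam : ℝ)
    (hexp : IsExpansive φ εX) (had : IsAdapted φ η lam)
    (ε₀ : ℝ) (hε₀ : 0 < ε₀) (hε₀η : ε₀ ≤ η) (hε₀X : ε₀ ≤ εX / 2) (x : X)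
    (hx : (x, x) ∈ interior (Dset φ ε₀)) (br : X → X → X)
    (hbr : ∀ y z : X, (y, z) ∈ Dset φ ε₀ → br y z ∈ locS φ y ε₀ ∩ locU φ z ε₀) :
    ∀ ε : ℝ, 0 < ε → ∃ δ : ℝ, 0 < δ ∧ ∀ y z : X, dist x y < δ → dist x z < δ →
      (y, z) ∈ Dset φ ε₀ ∧ br y z ∈ locS φ y ε ∩ locU φ z ε := by
  obtain ⟨r, hr0, hball⟩ := Metric.mem_nhds_iff.1 (mem_interior_iff_mem_nhds.1 hx)
  have hD : ∀ y z : X, dist x y < r → dist x z < r → (y, z) ∈ Dset φ ε₀ := by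
    intro y z hy hz
    apply hball
    rw [Metric.mem_ball, Prod.dist_eq, max_lt_iff]
    exact ⟨by rwa [dist_comm], by rwa [dist_comm]⟩
  intro ε hε
  have key : ∃ δ : ℝ, 0 < δ ∧ δ ≤ r ∧ ∀ y z : X, dist x y < δ → dist x z < δ →
      dist y (br y z) ≤ ε ∧ dist z (br y z) ≤ ε := by
    by_contra hcon
    push_neg at hcon
    have hseq : ∀ k : ℕ, ∃ yz : X × X,
        dist x yz.1 < min r (1 / ((k : ℝ) + 1)) ∧
        dist x yz.2 < min r (1 / ((k : ℝ) + 1)) ∧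
        ε - 1 / ((k : ℝ) + 1) < dist x (br yz.1 yz.2) := by
      intro k
      have hk0 : (0 : ℝ) < 1 / ((k : ℝ) + 1) := by positivity
      obtain ⟨y, z, hy, hz, hw⟩ := hcon (min r (1 / ((k : ℝ) + 1)))
        (lt_min hr0 hk0) (min_le_left _ _)
      refine ⟨(y, z), hy, hz, ?_⟩
      have hyk : dist x y < 1 / ((k : ℝ) + 1) := lt_of_lt_of_le hy (min_le_right _ _)
      have hzk : dist x z < 1 / ((k : ℝ) + 1) := lt_of_lt_of_le hz (min_le_right _ _)
      rcases le_or_gt (dist y (br y z)) ε with hle | hgt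
      · have hgtz := hw hle
        have htr : dist z (br y z) ≤ dist z x + dist x (br y z) := dist_triangle _ _ _
        rw [dist_comm z x] at htr
        linarith
      · have htr : dist y (br y z) ≤ dist y x + dist x (br y z) := dist_triangle _ _ _
        rw [dist_comm y x] at htr
        linarith
    choose u hu1 hu2 hu3 using hseq
    set w : ℕ → X := fun k => br (u k).1 (u k).2 with hwdef
    obtain ⟨p, -, g, hg, hgp⟩ := isCompact_univ.tendsto_subseq (fun k => Set.mem_univ (w k))
    have hone : Tendsto (fun k : ℕ => 1 / ((k : ℝ) + 1)) atTop (𝓝 0) :=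
      tendsto_one_div_add_atTop_nhds_zero_nat
    have hy_lim : Tendsto (fun k => (u k).1) atTop (𝓝 x) := by
      rw [tendsto_iff_dist_tendsto_zero]
      refine squeeze_zero (fun k => dist_nonneg) (fun k => ?_) hone
      rw [dist_comm]
      exact le_of_lt (lt_of_lt_of_le (hu1 k) (min_le_right _ _))
    have hz_lim : Tendsto (fun k => (u k).2) atTop (𝓝 x) := by
      rw [tendsto_iff_dist_tendsto_zero]
      refine squeeze_zero (fun k => dist_nonneg) (fun k => ?_) hone
      rw [dist_comm]
      exact le_of_lt (lt_of_lt_of_le (hu2 k) (min_le_right _ _))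
    have hDk : ∀ k, ((u k).1, (u k).2) ∈ Dset φ ε₀ := fun k =>
      hD _ _ (lt_of_lt_of_le (hu1 k) (min_le_left _ _))
        (lt_of_lt_of_le (hu2 k) (min_le_left _ _))
    have hS : p ∈ locS φ x ε₀ := by
      intro n
      have hc : Tendsto (fun k => dist (It φ n ((u (g k)).1)) (It φ n (w (g k)))) atTop
          (𝓝 (dist (It φ n x) (It φ n p))) :=
        Tendsto.dist (((It_continuous φ n).tendsto x).comp (hy_lim.comp hg.tendsto_atTop))
          (((It_continuous φ n).tendsto p).comp hgp)
      refine le_of_tendsto hc (Filter.Eventually.of_forall fun k => ?_)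
      exact (hbr _ _ (hDk (g k))).1 n
    have hU : p ∈ locU φ x ε₀ := by
      intro n
      have hc : Tendsto (fun k => dist (It φ (-(n : ℤ)) ((u (g k)).2))
          (It φ (-(n : ℤ)) (w (g k)))) atTop
          (𝓝 (dist (It φ (-(n : ℤ)) x) (It φ (-(n : ℤ)) p))) :=
        Tendsto.dist
          (((It_continuous φ (-(n : ℤ))).tendsto x).comp (hz_lim.comp hg.tendsto_atTop))
          (((It_continuous φ (-(n : ℤ))).tendsto p).comp hgp)
      refine le_of_tendsto hc (Filter.Eventually.of_forall fun k => ?_)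
      exact (hbr _ _ (hDk (g k))).2 n
    have hpx : p = x := by
      refine (hexp.2 x p fun n => ?_).symm
      have hεXε₀ : ε₀ ≤ εX := by linarith [hexp.1]
      obtain ⟨m, rfl | rfl⟩ := n.eq_nat_or_neg
      · exact le_trans (hS m) hεXε₀
      · exact le_trans (hU m) hεXε₀
    have hlow : Tendsto (fun k => ε - 1 / ((g k : ℝ) + 1)) atTop (𝓝 ε) := by
      have h2 : Tendsto (fun k => 1 / ((g k : ℝ) + 1)) atTop (𝓝 0) :=
        hone.comp hg.tendsto_atTop
      simpa using (tendsto_const_nhds (x := ε) (f := atTop)).sub h2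
    have hdist : Tendsto (fun k => dist x (w (g k))) atTop (𝓝 (dist x p)) :=
      Tendsto.dist tendsto_const_nhds hgp
    have hfin : ε ≤ dist x p :=
      le_of_tendsto_of_tendsto' hlow hdist fun k => le_of_lt (hu3 (g k))
    rw [hpx, dist_self] at hfin
    linarith
  obtain ⟨δ, hδ0, hδr, hC⟩ := key
  refine ⟨δ, hδ0, fun y z hy hz => ?_⟩
  have hDyz := hD y z (lt_of_lt_of_le hy hδr) (lt_of_lt_of_le hz hδr)
  obtain ⟨hwS, hwU⟩ := hbr y z hDyz
  obtain ⟨h1, h2⟩ := hC y z hy hz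
  refine ⟨hDyz, fun n => ?_, fun n => ?_⟩
  · exact le_trans (stable_dist_le φ had (fun m => le_trans (hwS m) hε₀η) n) h1
  · exact le_trans (unstable_dist_le φ had (fun m => le_trans (hwU m) hε₀η) n) h2

end Paper
end

section
/- If (X,φ) is a synchronizing dynamical system, then the set X_sync of synchronizing points is open and dense in X. -/
open Filter Topology Set

namespace Paper

variable {X : Type*} [MetricSpace X] [CompactSpace X]

lemma It_add_one (φ : X ≃ₜ X) (n : ℤ) (z : X) : It φ (n + 1) z = It φ n (φ z) := by
  simp [It, zpow_add, Equiv.Perm.mul_apply]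

lemma It_zero (φ : X ≃ₜ X) (z : X) : It φ 0 z = z := by simp [It]

/-- Openness for each fixed `ε`. -/
lemma sync_open_aux (φ : X ≃ₜ X) (ε₀ : ℝ) :
    IsOpen {x : X | IsSyncPt φ ε₀ x} := by
  rw [isOpen_iff_mem_nhds]
  intro x hx
  obtain ⟨ε, hε, hεle, hmem⟩ := hx
  have hdiag : Continuous fun y : X => (y, y) := continuous_id.prodMk continuous_id
  have hopen : IsOpen ((fun y : X => (y, y)) ⁻¹' interior (Dset φ ε)) :=
    isOpen_interior.preimage hdiag
  have hxmem : x ∈ (fun y : X => (y, y)) ⁻¹' interior (Dset φ ε) := hmem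
  refine Filter.mem_of_superset (hopen.mem_nhds hxmem) ?_
  intro y hy
  exact ⟨ε, hε, hεle, hy⟩

/-- Invariance of the sync set under `φ`. -/
lemma sync_phi (φ : X ≃ₜ X) (η lam ε₀ : ℝ) (had : IsAdapted φ η lam)
    (hη : ε₀ ≤ η) (x : X) (hx : IsSyncPt φ ε₀ x) : IsSyncPt φ ε₀ (φ x) := by
  obtain ⟨hηpos, hlam, hlam1, hS, hU⟩ := had
  obtain ⟨ε, hε, hεle, hmem⟩ := hx
  obtain ⟨O, hOsub, hOopen, hxO⟩ := mem_interior.mp hmem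
  refine ⟨ε, hε, hεle, mem_interior.mpr ?_⟩
  refine ⟨(Prod.map φ.symm φ.symm) ⁻¹' O ∩ {p : X × X | dist p.1 p.2 < (1 - lam) * ε},
    ?_, ?_, ?_, ?_⟩
  · -- subset of Dset φ ε
    rintro ⟨u, v⟩ ⟨hO, hd⟩
    obtain ⟨z, hzS, hzU⟩ := hOsub hO
    simp only [Prod.map_apply] at hzS hzU
    show (locS φ u ε ∩ locU φ v ε).Nonempty
    refine ⟨φ z, ?_, ?_⟩
    · -- stable
      intro n
      have h1 : It φ ((n : ℤ) + 1) (φ.symm u) = It φ n u := by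
        rw [It_add_one]; simp
      have h2 : It φ ((n : ℤ) + 1) z = It φ n (φ z) := It_add_one φ n z
      have := hzS (n + 1)
      push_cast at this
      rwa [h1, h2] at this
    · -- unstable
      intro n
      cases n with
      | zero =>
        simp only [Nat.cast_zero, neg_zero, It_zero]
        have hz0 : dist (φ.symm u) z ≤ ε := by
          have := hzS 0; simpa [It_zero] using this
        have hzη : z ∈ locS φ (φ.symm u) η := fun m =>
          le_trans (hzS m) (le_trans hεle hη)
        have hcontr : dist (φ (φ.symm u)) (φ z) ≤ lam * dist (φ.symm u) z :=
          hS (φ.symm u) z hzη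
        have hu : dist u (φ z) ≤ lam * ε := by
          have : dist (φ (φ.symm u)) (φ z) ≤ lam * ε :=
            le_trans hcontr (mul_le_mul_of_nonneg_left hz0 hlam.le)
          simpa using this
        calc dist v (φ z) ≤ dist v u + dist u (φ z) := dist_triangle _ _ _
          _ ≤ (1 - lam) * ε + lam * ε := by
              refine add_le_add ?_ hu
              rw [dist_comm]; exact hd.le
          _ = ε := by ring
      | succ m =>
        have e1 : -(m : ℤ) - 1 + 1 = -(m : ℤ) := by ring
        have hv : It φ (-(m : ℤ)) (φ.symm v) = It φ (-(m : ℤ) - 1) v := by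
          have h := It_add_one φ (-(m : ℤ) - 1) (φ.symm v)
          rw [e1] at h
          simpa using h
        have hz : It φ (-(m : ℤ)) z = It φ (-(m : ℤ) - 1) (φ z) := by
          have h := It_add_one φ (-(m : ℤ) - 1) z
          rwa [e1] at h
        have e2 : -((m + 1 : ℕ) : ℤ) = -(m : ℤ) - 1 := by push_cast; ring
        rw [e2, ← hv, ← hz]
        exact hzU m
  · -- open
    refine IsOpen.inter (hOopen.preimage ?_) (isOpen_lt (by fun_prop) continuous_const)
    exact (Homeomorph.continuous _).prodMap (Homeomorph.continuous _)
  · -- mem preimage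
    simp only [Set.mem_preimage, Prod.map_apply, Homeomorph.symm_apply_apply]
    exact hxO
  · -- dist condition
    simp only [Set.mem_setOf_eq, dist_self]
    have : 0 < 1 - lam := by linarith
    positivity

/-- in a synchronizing system, the synchronizing points form an
open dense set. -/
theorem syncPts_isOpen_dense (φ : X ≃ₜ X) (εX η lam : ℝ)
    (hexp : IsExpansive φ εX) (had : IsAdapted φ η lam) (hirr : Irred φ)
    (hsync : ∃ x : X, IsSyncPt φ (min η (εX / 2)) x) :
    IsOpen {x : X | IsSyncPt φ (min η (εX / 2)) x} ∧
      Dense {x : X | IsSyncPt φ (min η (εX / 2)) x} := by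
  set S := {x : X | IsSyncPt φ (min η (εX / 2)) x} with hSdef
  have hSopen : IsOpen S := sync_open_aux φ _
  have hη : min η (εX / 2) ≤ η := min_le_left _ _
  have hinv : ∀ x ∈ S, φ x ∈ S := fun x hx => sync_phi φ η lam _ had hη x hx
  have hit : ∀ (n : ℕ), ∀ x ∈ S, It φ n x ∈ S := by
    intro n
    induction n with
    | zero => intro x hx; simpa [It_zero] using hx
    | succ m ih =>
      intro x hx
      have : It φ ((m : ℤ) + 1) x = It φ m (φ x) := It_add_one φ m x
      have e : ((m + 1 : ℕ) : ℤ) = (m : ℤ) + 1 := by push_cast; ring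
      rw [e, this]
      exact ih (φ x) (hinv x hx)
  refine ⟨hSopen, ?_⟩
  rw [dense_iff_inter_open]
  intro V hV hVne
  obtain ⟨x₀, hx₀⟩ := hsync
  obtain ⟨n, hn, y, ⟨⟨s, hsS, rfl⟩, hyV⟩⟩ :=
    hirr S V hSopen hV ⟨x₀, hx₀⟩ hVne
  exact ⟨It φ n s, hyV, hit n s hsS⟩

end Paper
end
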